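/- With β₃⁺ = (2 l_a)/(3 c T₀)·(T⁺ − T₀) and T⁺ given by (C + 2 l_a²/(3 c T₀)) T⁺ = 𝒯 + C T⁻ + 2 l_a²/(3c), the admissibility conditions 0 ≤ β₃⁺ ≤ 1 hold if and only if 0 ≤ 𝒯 + C(T⁻ − T₀) ≤ (3 c C T₀ + 2 l_a²)/(2 l_a). -/

import Mathlib

/-- Admissibility `0 ≤ β₃⁺ ≤ 1` of the closed-form solution holds iff the dissipated
work satisfies `0 ≤ 𝒯 + C(T⁻ − T₀) ≤ (3cCT₀ + 2l_a²)/(2l_a)`. -/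
theorem admissibility_iff (c C la T0 Tm 𝒯 β3 Tp : ℝ)
    (hc : 0 < c) (hC : 0 < C) (hla : 0 < la) (hT0 : 0 < T0)
    (hβ3 : β3 = 2 * la / (3 * c * T0) * (Tp - T0))
    (hTp : (C + 2 * la ^ 2 / (3 * c * T0)) * Tp = 𝒯 + C * Tm + 2 * la ^ 2 / (3 * c)) :
    (0 ≤ β3 ∧ β3 ≤ 1) ↔
      (0 ≤ 𝒯 + C * (Tm - T0) ∧
        𝒯 + C * (Tm - T0) ≤ (3 * c * C * T0 + 2 * la ^ 2) / (2 * la)) := by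
  have hc' := hc.ne'
  have hT0' := hT0.ne'
  have hla' := hla.ne'
  field_simp at hTp
  have hK0 : (3 * c) * ((3 * c * C * T0 + 2 * la ^ 2) * (Tp - T0))
      = (3 * c) * (3 * c * T0 * (𝒯 + C * (Tm - T0))) := by linear_combination (3 * c) * hTp
  have hK := mul_left_cancel₀ (by positivity : (3 * c : ℝ) ≠ 0) hK0
  have hpos : 0 < 3 * c * C * T0 + 2 * la ^ 2 := by positivity
  have h3cT0 : 0 < 3 * c * T0 := by positivity
  constructor
  · rintro ⟨h0, h1⟩
    rw [hβ3] at h0 h1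
    have hTpn : 0 ≤ Tp - T0 := by
      by_contra h
      push_neg at h
      have : 2 * la / (3 * c * T0) * (Tp - T0) < 0 := by
        apply mul_neg_of_pos_of_neg (by positivity) h
      linarith
    constructor
    · nlinarith
    · rw [div_mul_eq_mul_div, div_le_iff₀ h3cT0] at h1
      rw [le_div_iff₀ (by positivity)]
      nlinarith
  · rintro ⟨h0, h1⟩
    rw [le_div_iff₀ (by positivity)] at h1
    have hTpn : 0 ≤ Tp - T0 := by nlinarith
    rw [hβ3]
    constructor
    · positivity
    · rw [div_mul_eq_mul_div, div_le_iff₀ h3cT0]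
      nlinarith
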